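/- Let α: S → T and β: T → U be surjective homomorphisms of finite semigroups. Then the composite β ∘ α is injective on every R-class of S if and only if both α is injective on every R-class of S and β is injective on every R-class of T. -/
import Mathlib


/-- Green's R-preorder: `a ≤_R b` iff `a S¹ ⊆ b S¹`. -/
def rLe {S : Type*} [Semigroup S] (a b : S) : Prop := a = b ∨ ∃ x, a = b * x

/-- Green's R-equivalence. -/
def rEquiv {S : Type*} [Semigroup S] (a b : S) : Prop := rLe a b ∧ rLe b a

section Aux

variable {S : Type*} [Semigroup S]

/-- `spow a n = a^(n+1)` -/
def spow (a : S) : ℕ → S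
  | 0 => a
  | n+1 => spow a n * a

lemma spow_succ (a : S) (n : ℕ) : spow a (n+1) = spow a n * a := rfl

lemma spow_add (a : S) (m n : ℕ) : spow a (m + n + 1) = spow a m * spow a n := by
  induction n with
  | zero => rfl
  | succ n ih =>
      have h : m + (n+1) + 1 = (m + n + 1) + 1 := by omega
      rw [h, spow_succ, ih, spow_succ, mul_assoc]

lemma spow_period (a : S) {i p : ℕ} (h : spow a (i + p) = spow a i) :
    ∀ n, i ≤ n → spow a (n + p) = spow a n := by
  intro n hn
  obtain ⟨r, rfl⟩ := Nat.exists_eq_add_of_le hn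
  cases r with
  | zero => simpa using h
  | succ r =>
      have h1 : i + (r+1) + p = (i + p) + r + 1 := by omega
      have h2 : i + (r+1) = i + r + 1 := by omega
      rw [h1, spow_add, h, ← spow_add, h2]

lemma spow_period_mul (a : S) {i p : ℕ} (h : spow a (i + p) = spow a i) :
    ∀ k n, i ≤ n → spow a (n + k * p) = spow a n := by
  intro k
  induction k with
  | zero => intro n hn; simp
  | succ k ih =>
      intro n hn
      have h1 : n + (k+1)*p = (n + k*p) + p := by ring
      rw [h1, spow_period a h _ (by omega), ih n hn]

lemma exists_spow_idem [Finite S] (a : S) :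
    ∃ m, spow a (m+1) * spow a (m+1) = spow a (m+1) := by
  obtain ⟨i, j, hne, heq⟩ := Finite.exists_ne_map_eq_of_infinite (spow a)
  have key : ∃ i p, 1 ≤ p ∧ spow a (i + p) = spow a i := by
    rcases lt_trichotomy i j with h | h | h
    · exact ⟨i, j - i, by omega, by rw [show i + (j-i) = j by omega]; exact heq.symm⟩
    · exact absurd h hne
    · exact ⟨j, i - j, by omega, by rw [show j + (i-j) = i by omega]; exact heq⟩
  clear heq hne
  obtain ⟨i, p, hp, h⟩ := key
  have h2 : 2 ≤ (i+2)*p := by calc 2 = 2*1 := rfl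
                                   _ ≤ (i+2)*p := Nat.mul_le_mul (by omega) hp
  have hip : i + 2 ≤ (i+2)*p := by calc i+2 = (i+2)*1 := by ring
                                         _ ≤ (i+2)*p := Nat.mul_le_mul_left _ hp
  refine ⟨(i+2)*p - 2, ?_⟩
  set M := (i+2)*p - 2 + 1 with hM
  have hMi : i ≤ M := by omega
  have hMM : M + M + 1 = M + (i+2)*p := by omega
  rw [← spow_add, hMM, spow_period_mul a h (i+2) M hMi]

lemma map_spow {T : Type*} [Semigroup T] (α : S → T)
    (hα : ∀ a b : S, α (a * b) = α a * α b) (a : S) (n : ℕ) :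
    α (spow a n) = spow (α a) n := by
  induction n with
  | zero => rfl
  | succ n ih => rw [spow_succ, hα, ih, spow_succ]

lemma mul_spow_self (t : S) (z : S) (h : t * z = t) : ∀ n, t * spow z n = t := by
  intro n
  induction n with
  | zero => exact h
  | succ n ih => rw [spow_succ, ← mul_assoc, ih, h]

/-- Lifting an R-related pair along a surjective homomorphism. -/
lemma lift_r {T : Type*} [Finite S] [Semigroup T]
    (α : S → T) (hα : ∀ a b : S, α (a * b) = α a * α b) (hαs : Function.Surjective α)
    {t₁ t₂ : T} (h : rEquiv t₁ t₂) :
    ∃ s₁ s₂ : S, rEquiv s₁ s₂ ∧ α s₁ = t₁ ∧ α s₂ = t₂ := by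
  obtain ⟨h12, h21⟩ := h
  rcases h12 with heq | ⟨x, hx⟩
  · obtain ⟨s, hs⟩ := hαs t₁
    exact ⟨s, s, ⟨Or.inl rfl, Or.inl rfl⟩, hs, heq ▸ hs⟩
  rcases h21 with heq | ⟨y, hy⟩
  · obtain ⟨s, hs⟩ := hαs t₁
    exact ⟨s, s, ⟨Or.inl rfl, Or.inl rfl⟩, hs, heq ▸ hs⟩
  -- t₁ = t₂ * x, t₂ = t₁ * y
  obtain ⟨s, hs⟩ := hαs t₁
  obtain ⟨u, hu⟩ := hαs y
  obtain ⟨v, hv⟩ := hαs x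
  set w := u * v with hw
  obtain ⟨m, hm⟩ := exists_spow_idem w
  set e := spow w (m+1) with he
  refine ⟨s * e, s * e * u, ⟨?_, Or.inr ⟨u, rfl⟩⟩, ?_, ?_⟩
  · -- s * e = (s * e * u) * (v * spow w m)
    refine Or.inr ⟨v * spow w m, ?_⟩
    have key : e * u * (v * spow w m) = e := by
      have h1 : e * u * (v * spow w m) = e * w * spow w m := by
        rw [hw]; simp only [mul_assoc]
      have h2 : e * w = spow w (m+2) := by
        rw [he, ← spow_succ]
      have h3 : spow w (m+2) * spow w m = spow w (2*m+3) := by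
        rw [← spow_add]; congr 1; omega
      have h4 : spow w (2*m+3) = e * e := by
        rw [he, ← spow_add]; congr 1; omega
      rw [h1, h2, h3, h4, hm]
    calc s * e = s * (e * u * (v * spow w m)) := by rw [key]
      _ = s * e * u * (v * spow w m) := by simp only [mul_assoc]
  · -- α (s * e) = t₁
    have hαw : α w = y * x := by rw [hw, hα, hu, hv]
    have ht : t₁ * (y * x) = t₁ := by rw [← mul_assoc, ← hy, ← hx]
    rw [hα, hs, he, map_spow α hα, hαw, mul_spow_self t₁ (y*x) ht]
  · -- α (s * e * u) = t₂
    have hαw : α w = y * x := by rw [hw, hα, hu, hv]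
    have ht : t₁ * (y * x) = t₁ := by rw [← mul_assoc, ← hy, ← hx]
    rw [hα, hα, hs, he, map_spow α hα, hαw, mul_spow_self t₁ (y*x) ht, hu, ← hy]

lemma rEquiv_map {T : Type*} [Semigroup T] (α : S → T)
    (hα : ∀ a b : S, α (a * b) = α a * α b) {a b : S} (h : rEquiv a b) :
    rEquiv (α a) (α b) := by
  obtain ⟨h1, h2⟩ := h
  constructor
  · rcases h1 with h | ⟨x, hx⟩
    · exact Or.inl (by rw [h])
    · exact Or.inr ⟨α x, by rw [hx, hα]⟩
  · rcases h2 with h | ⟨x, hx⟩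
    · exact Or.inl (by rw [h])
    · exact Or.inr ⟨α x, by rw [hx, hα]⟩

end Aux

theorem stmt2 {S T U : Type*} [Semigroup S] [Fintype S] [Semigroup T] [Fintype T]
    [Semigroup U] [Fintype U]
    (α : S → T) (hα : ∀ a b : S, α (a * b) = α a * α b) (hαs : Function.Surjective α)
    (β : T → U) (hβ : ∀ a b : T, β (a * b) = β a * β b) (hβs : Function.Surjective β) :
    (∀ s₁ s₂ : S, rEquiv s₁ s₂ → β (α s₁) = β (α s₂) → s₁ = s₂) ↔
      ((∀ s₁ s₂ : S, rEquiv s₁ s₂ → α s₁ = α s₂ → s₁ = s₂) ∧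
       (∀ t₁ t₂ : T, rEquiv t₁ t₂ → β t₁ = β t₂ → t₁ = t₂)) := by
  constructor
  · intro h
    constructor
    · intro s₁ s₂ hr heq
      exact h s₁ s₂ hr (by rw [heq])
    · intro t₁ t₂ hr heq
      obtain ⟨s₁, s₂, hr', h1, h2⟩ := lift_r α hα hαs hr
      have := h s₁ s₂ hr' (by rw [h1, h2, heq])
      rw [← h1, ← h2, this]
  · rintro ⟨hA, hB⟩ s₁ s₂ hr heq
    exact hA s₁ s₂ hr (hB _ _ (rEquiv_map α hα hr) heq)
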